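/- arXiv:2211.04523 — 8 statements merged into one kernel-verified Lean document; each statement's English description precedes it below -/
import Mathlib

section
/- Let h : [0,∞) → ℝ be a non-decreasing function that is sub-homogeneous of exponent λ, i.e. h(c·x) ≤ c^λ · h(x) for all c ≥ 1 and x ≥ 0. Let μ be a nonzero rational number and ν a rational number. If α ∈ ℝ satisfies inf_{q ∈ ℤ, q ≠ 0} |q|·h(|q|)·‖qα‖ > 0, then μ·α + ν also satisfies inf_{q ∈ ℤ, q ≠ 0} |q|·h(|q|)·‖q(μα+ν)‖ > 0, where ‖x‖ denotes the distance from x to the nearest integer. -/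
/-- Distance from a real number to the nearest integer. -/
noncomputable def distInt (x : ℝ) : ℝ := |x - round x|

lemma distInt_nonneg (x : ℝ) : 0 ≤ distInt x := abs_nonneg _

lemma distInt_le (x : ℝ) (m : ℤ) : distInt x ≤ |x - (m : ℝ)| := by
  rcases eq_or_ne m (round x) with hm | hm
  · simp [distInt, hm]
  · have h1 : |x - (round x : ℝ)| ≤ 1 / 2 := abs_sub_round x
    have h2 : (1 : ℝ) ≤ |(m : ℝ) - (round x : ℝ)| := by
      have hne : m - round x ≠ 0 := sub_ne_zero.mpr hm
      have := Int.one_le_abs hne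
      calc (1 : ℝ) ≤ |((m - round x : ℤ) : ℝ)| := by exact_mod_cast this
        _ = |(m : ℝ) - (round x : ℝ)| := by push_cast; ring_nf
    have h3 : |(m : ℝ) - (round x : ℝ)| ≤ |(m : ℝ) - x| + |x - (round x : ℝ)| := by
      calc |(m : ℝ) - (round x : ℝ)| = |((m : ℝ) - x) + (x - round x)| := by ring_nf
        _ ≤ |(m : ℝ) - x| + |x - (round x : ℝ)| := abs_add_le _ _
    have h4 : |(m : ℝ) - x| = |x - (m : ℝ)| := abs_sub_comm _ _
    unfold distInt
    linarith
lemma distInt_int_mul (n : ℤ) (x : ℝ) : distInt ((n : ℝ) * x) ≤ |(n : ℝ)| * distInt x := by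
  calc distInt ((n : ℝ) * x) ≤ |(n : ℝ) * x - ((n * round x : ℤ) : ℝ)| := distInt_le _ _
    _ = |(n : ℝ)| * |x - (round x : ℝ)| := by
        push_cast
        rw [← abs_mul]
        ring_nf
    _ = |(n : ℝ)| * distInt x := rfl

lemma distInt_sub_int (x : ℝ) (n : ℤ) : distInt (x - (n : ℝ)) = distInt x := by
  unfold distInt
  rw [round_sub_intCast]
  push_cast
  ring_nf

theorem stmt0 (h : ℝ → ℝ) (lam : ℝ)
    (hmono : ∀ x y : ℝ, 0 ≤ x → x ≤ y → h x ≤ h y)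
    (hsub : ∀ c x : ℝ, 1 ≤ c → 0 ≤ x → h (c * x) ≤ c ^ lam * h x)
    (μ ν : ℚ) (hμ : μ ≠ 0) (α : ℝ)
    (hα : ∃ ε > 0, ∀ q : ℤ, q ≠ 0 →
      ε ≤ |(q : ℝ)| * h |(q : ℝ)| * distInt ((q : ℝ) * α)) :
    ∃ ε > 0, ∀ q : ℤ, q ≠ 0 →
      ε ≤ |(q : ℝ)| * h |(q : ℝ)| * distInt ((q : ℝ) * ((μ : ℝ) * α + (ν : ℝ))) := by
  obtain ⟨ε₀, hε₀, H⟩ := hα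
  -- h is positive at |q'| for q' ≠ 0
  have hpos : ∀ q' : ℤ, q' ≠ 0 → 0 < h |(q' : ℝ)| := by
    intro q' hq'
    by_contra hc
    push_neg at hc
    have h1 := H q' hq'
    have h2 : |(q' : ℝ)| * h |(q' : ℝ)| * distInt ((q' : ℝ) * α) ≤ 0 := by
      have h3 : |(q' : ℝ)| * h |(q' : ℝ)| ≤ 0 :=
        mul_nonpos_of_nonneg_of_nonpos (abs_nonneg _) hc
      exact mul_nonpos_of_nonpos_of_nonneg h3 (distInt_nonneg _)
    linarith
  set a : ℤ := μ.num * (ν.den : ℤ) with ha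
  set b : ℤ := ν.num * (μ.den : ℤ) with hb
  set D : ℤ := (μ.den : ℤ) * (ν.den : ℤ) with hD
  have haz : a ≠ 0 := mul_ne_zero (Rat.num_ne_zero.mpr hμ) (by exact_mod_cast ν.den_nz)
  have hDpos : 0 < D := by positivity
  have ha1 : (1 : ℝ) ≤ |(a : ℝ)| := by exact_mod_cast Int.one_le_abs haz
  have hDR : (0 : ℝ) < (D : ℝ) := by exact_mod_cast hDpos
  -- key rational identities over ℝ
  have keyμ : (a : ℝ) = (D : ℝ) * (μ : ℝ) := by
    rw [ha, hD]
    push_cast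
    rw [Rat.cast_def]
    have : ((μ.den : ℝ)) ≠ 0 := by positivity
    field_simp
  have keyν : (b : ℝ) = (D : ℝ) * (ν : ℝ) := by
    rw [hb, hD]
    push_cast
    rw [Rat.cast_def]
    have : ((ν.den : ℝ)) ≠ 0 := by positivity
    field_simp
  refine ⟨ε₀ / (|(a : ℝ)| * |(a : ℝ)| ^ lam * (D : ℝ)), by positivity, ?_⟩
  intro q hq
  set β : ℝ := (μ : ℝ) * α + (ν : ℝ) with hβ
  have hp : q * a ≠ 0 := mul_ne_zero hq haz
  have h1 := H (q * a) hp
  -- distance comparison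
  have hid : ((q * a : ℤ) : ℝ) * α = (D : ℝ) * ((q : ℝ) * β) - ((q * b : ℤ) : ℝ) := by
    push_cast
    rw [hβ]
    push_cast [keyμ, keyν] at *
    nlinarith [keyμ, keyν]
  have hdist : distInt (((q * a : ℤ) : ℝ) * α) ≤ (D : ℝ) * distInt ((q : ℝ) * β) := by
    rw [hid]
    calc distInt ((D : ℝ) * ((q : ℝ) * β) - ((q * b : ℤ) : ℝ))
        = distInt ((D : ℝ) * ((q : ℝ) * β)) := distInt_sub_int _ _
      _ ≤ |(D : ℝ)| * distInt ((q : ℝ) * β) := distInt_int_mul _ _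
      _ = (D : ℝ) * distInt ((q : ℝ) * β) := by rw [abs_of_pos hDR]
  -- sub-homogeneity
  have habs : |((q * a : ℤ) : ℝ)| = |(a : ℝ)| * |(q : ℝ)| := by
    push_cast
    rw [abs_mul]
    ring
  have hsub' : h |((q * a : ℤ) : ℝ)| ≤ |(a : ℝ)| ^ lam * h |(q : ℝ)| := by
    rw [habs]
    exact hsub _ _ ha1 (abs_nonneg _)
  have hq0 : (0 : ℝ) < |(q : ℝ)| := by
    have : (q : ℝ) ≠ 0 := by exact_mod_cast hq
    exact abs_pos.mpr this
  have hhq : 0 < h |(q : ℝ)| := hpos q hq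
  have halam : (0 : ℝ) < |(a : ℝ)| ^ lam := Real.rpow_pos_of_pos (by linarith) lam
  -- chain
  have step1 : |((q * a : ℤ) : ℝ)| * h |((q * a : ℤ) : ℝ)| * distInt (((q * a : ℤ) : ℝ) * α)
      ≤ |((q * a : ℤ) : ℝ)| * (|(a : ℝ)| ^ lam * h |(q : ℝ)|) * distInt (((q * a : ℤ) : ℝ) * α) :=
    mul_le_mul_of_nonneg_right (mul_le_mul_of_nonneg_left hsub' (abs_nonneg _))
      (distInt_nonneg _)
  have step2 : |((q * a : ℤ) : ℝ)| * (|(a : ℝ)| ^ lam * h |(q : ℝ)|) * distInt (((q * a : ℤ) : ℝ) * α)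
      ≤ |((q * a : ℤ) : ℝ)| * (|(a : ℝ)| ^ lam * h |(q : ℝ)|) * ((D : ℝ) * distInt ((q : ℝ) * β)) := by
    apply mul_le_mul_of_nonneg_left hdist
    exact mul_nonneg (abs_nonneg _) (mul_nonneg halam.le hhq.le)
  have hfinal : ε₀ ≤ (|(q : ℝ)| * h |(q : ℝ)| * distInt ((q : ℝ) * β)) * (|(a : ℝ)| * |(a : ℝ)| ^ lam * (D : ℝ)) := by
    have heq : |((q * a : ℤ) : ℝ)| * (|(a : ℝ)| ^ lam * h |(q : ℝ)|) * ((D : ℝ) * distInt ((q : ℝ) * β))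
        = (|(q : ℝ)| * h |(q : ℝ)| * distInt ((q : ℝ) * β)) * (|(a : ℝ)| * |(a : ℝ)| ^ lam * (D : ℝ)) := by
      rw [habs]; ring
    linarith [h1, step1, step2, heq.le]
  rw [div_le_iff₀ (by positivity)]
  exact hfinal
end

section
/- Let ψ : [0,∞) → (0,1] be continuous and non-increasing, let l ≥ 1, and set h(x) := 1/(x·ψ(x)). Suppose α ∈ ℝ^l is such that there exists κ > 0 with the property: for every T ≥ 1 there is no q ∈ ℤ\{0} and p ∈ ℤ^l satisfying both ∏_{i=1}^l |α_i q − p_i| < κ·ψ(T) and |q| < T. Then inf_{q ∈ ℕ} q·h(q)·∏_{i=1}^l ‖α_i q‖ > 0, i.e. α ∈ Mad(l,h). -/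
theorem stmt1 (l : ℕ) (hl : 1 ≤ l) (ψ : ℝ → ℝ)
    (hcont : ContinuousOn ψ (Set.Ici 0))
    (hmono : ∀ x y : ℝ, 0 ≤ x → x ≤ y → ψ y ≤ ψ x)
    (hpos : ∀ x : ℝ, 0 ≤ x → 0 < ψ x) (hone : ∀ x : ℝ, 0 ≤ x → ψ x ≤ 1)
    (α : Fin l → ℝ)
    (hκ : ∃ κ > 0, ∀ T : ℝ, 1 ≤ T →
      ¬ ∃ (q : ℤ) (p : Fin l → ℤ), q ≠ 0 ∧
        (∏ i, |α i * (q : ℝ) - (p i : ℝ)|) < κ * ψ T ∧ |(q : ℝ)| < T) :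
    ∃ ε > 0, ∀ q : ℕ, q ≠ 0 →
      ε ≤ (q : ℝ) * (1 / ((q : ℝ) * ψ (q : ℝ))) * ∏ i, distInt (α i * (q : ℝ)) := by
  obtain ⟨κ, hκpos, hno⟩ := hκ
  refine ⟨κ, hκpos, fun q hq => ?_⟩
  have hq1 : (1:ℝ) ≤ (q:ℝ) := by exact_mod_cast Nat.one_le_iff_ne_zero.mpr hq
  have hq0 : (0:ℝ) < (q:ℝ) := lt_of_lt_of_le zero_lt_one hq1
  set P := ∏ i, distInt (α i * (q:ℝ)) with hP
  have hψq : 0 < ψ (q:ℝ) := hpos _ hq0.le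
  have key : κ * ψ (q:ℝ) ≤ P := by
    by_contra hlt
    push_neg at hlt
    have hlt' : P / κ < ψ (q:ℝ) := (div_lt_iff₀' hκpos).mpr hlt
    have hcw : ContinuousWithinAt ψ (Set.Ici 0) (q:ℝ) := hcont _ hq0.le
    have hmem : ψ ⁻¹' Set.Ioi (P / κ) ∈ nhdsWithin (q:ℝ) (Set.Ici 0) :=
      hcw (Ioi_mem_nhds hlt')
    have hmem' : ψ ⁻¹' Set.Ioi (P / κ) ∈ nhdsWithin (q:ℝ) (Set.Ioi (q:ℝ)) :=
      nhdsWithin_mono _ (fun x hx => le_of_lt (hq0.trans hx)) hmem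
    obtain ⟨T, hT1, hT2⟩ := Filter.nonempty_of_mem (Filter.inter_mem hmem' self_mem_nhdsWithin)
    have hTq : (q:ℝ) < T := hT2
    have hψT : P / κ < ψ T := hT1
    apply hno T (hq1.trans hTq.le)
    refine ⟨(q:ℤ), fun i => round (α i * (q:ℝ)), ?_, ?_, ?_⟩
    · exact_mod_cast hq
    · have : (∏ i, |α i * ((q:ℤ):ℝ) - ((round (α i * (q:ℝ)) : ℤ) : ℝ)|) = P := by
        simp [hP, distInt]
      rw [this]
      exact (div_lt_iff₀' hκpos).mp hψT
    · rw [show |((q:ℤ):ℝ)| = (q:ℝ) by simp [abs_of_nonneg hq0.le]]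
      exact hTq
  have hrw : (q : ℝ) * (1 / ((q : ℝ) * ψ (q:ℝ))) * P = P / ψ (q:ℝ) := by
    field_simp
  rw [hrw, le_div_iff₀ hψq]
  exact key
end

section
/- For any m, n ∈ ℕ and any continuous non-increasing function ψ : [0,∞) → (0,1], there exists a unique continuous function R : [0,∞) → ℝ such that: (i) the map t ↦ t − n·R(t) is strictly increasing and tends to ∞ as t → ∞; (ii) the map t ↦ t + m·R(t) is non-decreasing; and (iii) ψ(e^{t − nR(t)}) = e^{−t − mR(t)} for all t ≥ 0. -/
open Filter Real

theorem stmt3 (m n : ℕ) (hm : 0 < m) (hn : 0 < n) (ψ : ℝ → ℝ)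
    (hcont : ContinuousOn ψ (Set.Ici 0))
    (hmono : ∀ x y : ℝ, 0 ≤ x → x ≤ y → ψ y ≤ ψ x)
    (hpos : ∀ x : ℝ, 0 ≤ x → 0 < ψ x) (hone : ∀ x : ℝ, 0 ≤ x → ψ x ≤ 1) :
    ∃ R : ℝ → ℝ,
      (ContinuousOn R (Set.Ici 0) ∧
        StrictMonoOn (fun t => t - (n : ℝ) * R t) (Set.Ici 0) ∧
        Filter.Tendsto (fun t => t - (n : ℝ) * R t) Filter.atTop Filter.atTop ∧
        MonotoneOn (fun t => t + (m : ℝ) * R t) (Set.Ici 0) ∧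
        ∀ t : ℝ, 0 ≤ t → ψ (Real.exp (t - (n : ℝ) * R t)) = Real.exp (-t - (m : ℝ) * R t)) ∧
      ∀ R' : ℝ → ℝ,
        (ContinuousOn R' (Set.Ici 0) ∧
          StrictMonoOn (fun t => t - (n : ℝ) * R' t) (Set.Ici 0) ∧
          Filter.Tendsto (fun t => t - (n : ℝ) * R' t) Filter.atTop Filter.atTop ∧
          MonotoneOn (fun t => t + (m : ℝ) * R' t) (Set.Ici 0) ∧
          ∀ t : ℝ, 0 ≤ t → ψ (Real.exp (t - (n : ℝ) * R' t)) = Real.exp (-t - (m : ℝ) * R' t)) →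
        ∀ t : ℝ, 0 ≤ t → R' t = R t := by
  have hm' : (0:ℝ) < m := by exact_mod_cast hm
  have hn' : (0:ℝ) < n := by exact_mod_cast hn
  set h : ℝ → ℝ := fun p => -Real.log (ψ (Real.exp p)) with hh
  have hψe : ∀ p : ℝ, 0 < ψ (Real.exp p) := fun p => hpos _ (Real.exp_pos p).le
  have hmono_h : Monotone h := by
    intro p q hpq
    have h1 : ψ (Real.exp q) ≤ ψ (Real.exp p) :=
      hmono _ _ (Real.exp_pos p).le (Real.exp_le_exp.2 hpq)
    have := Real.log_le_log (hψe q) h1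
    simp only [hh]; linarith
  have hnonneg_h : ∀ p, 0 ≤ h p := by
    intro p
    have h1 : ψ (Real.exp p) ≤ 1 := hone _ (Real.exp_pos p).le
    have := Real.log_nonpos (hψe p).le h1
    simp only [hh]; linarith
  have hcont_h : Continuous h := by
    apply continuous_iff_continuousAt.2
    intro p
    have h1 : ContinuousAt ψ (Real.exp p) :=
      hcont.continuousAt (Ici_mem_nhds (Real.exp_pos p))
    have h2 : ContinuousAt (ψ ∘ Real.exp) p := h1.comp Real.continuous_exp.continuousAt
    exact (h2.log (hψe p).ne').neg
  set g : ℝ → ℝ := fun p => m * p + n * h p with hg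
  have hgmono : StrictMono g := by
    intro p q hpq
    have h1 := hmono_h hpq.le
    simp only [hg]
    have : (m:ℝ) * p < m * q := by nlinarith
    nlinarith
  have hgcont : Continuous g :=
    (continuous_const.mul continuous_id).add (continuous_const.mul hcont_h)
  have hgtop : Tendsto g atTop atTop := by
    apply tendsto_atTop_mono (fun p => ?_) (tendsto_id.const_mul_atTop hm')
    simp only [hg, id]
    nlinarith [hnonneg_h p]
  have hgbot : Tendsto g atBot atBot := by
    have hbd : ∀ᶠ p in atBot, g p ≤ (m:ℝ) * p + n * h 0 := by
      filter_upwards [eventually_le_atBot (0:ℝ)] with p hp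
      simp only [hg]
      nlinarith [hmono_h hp]
    have hlin : Tendsto (fun p => (m:ℝ) * p + (n:ℝ) * h 0) atBot atBot :=
      tendsto_atBot_add_const_right atBot _ (tendsto_id.const_mul_atBot hm')
    exact tendsto_atBot_mono' atBot hbd hlin
  have hgsurj : Function.Surjective g := hgcont.surjective hgtop hgbot
  let e : ℝ ≃o ℝ := StrictMono.orderIsoOfSurjective g hgmono hgsurj
  have he : ∀ p, e p = g p := fun p => rfl
  set P : ℝ → ℝ := fun t => e.symm (((m:ℝ)+n) * t) with hP
  have hgP : ∀ t, g (P t) = ((m:ℝ)+n) * t := fun t => e.apply_symm_apply _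
  have hPmono : StrictMono P :=
    e.symm.strictMono.comp fun a b hab => by
      have : (0:ℝ) < (m:ℝ)+n := by positivity
      exact (mul_lt_mul_iff_right₀ this).2 hab
  have hPcont : Continuous P :=
    (OrderIso.continuous e.symm).comp (continuous_const.mul continuous_id)
  set R : ℝ → ℝ := fun t => (t - P t) / n with hR
  have key1 : ∀ t, t - (n:ℝ) * R t = P t := by
    intro t; simp only [hR]; field_simp; ring
  have key2 : ∀ t, t + (m:ℝ) * R t = h (P t) := by
    intro t
    have := hgP t
    simp only [hg] at this
    simp only [hR]
    field_simp
    nlinarith [this]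
  have keyψ : ∀ p : ℝ, ψ (Real.exp p) = Real.exp (-(h p)) := by
    intro p
    simp only [hh, neg_neg]
    exact (Real.exp_log (hψe p)).symm
  refine ⟨R, ⟨?_, ?_, ?_, ?_, ?_⟩, ?_⟩
  · exact ((continuous_id.sub hPcont).div_const _).continuousOn
  · intro a _ b _ hab
    simpa only [key1] using hPmono hab
  · have hPtop : Tendsto P atTop atTop := by
      refine (tendsto_atTop_atTop_of_monotone e.symm.monotone fun b => ⟨e b, by simp⟩).comp ?_
      exact tendsto_id.const_mul_atTop (by positivity)
    exact hPtop.congr fun t => (key1 t).symm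
  · intro a _ b _ hab
    simp only
    rw [key2 a, key2 b]
    exact hmono_h (hPmono.monotone hab)
  · intro t _
    rw [key1 t, keyψ (P t)]
    congr 1
    have := key2 t
    linarith
  · rintro R' ⟨-, -, -, -, heq⟩ t ht
    have hgp : g (t - (n:ℝ) * R' t) = ((m:ℝ)+n) * t := by
      have h1 := heq t ht
      have h2 : Real.log (ψ (Real.exp (t - (n:ℝ) * R' t))) = -t - m * R' t := by
        rw [h1, Real.log_exp]
      simp only [hg, hh, h2]
      ring
    have : t - (n:ℝ) * R' t = P t := hgmono.injective (by rw [hgp, hgP t])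
    simp only [hR]
    field_simp
    linarith [this]
end

section
/- Let m, n ∈ ℕ, t₀ ≥ 0, and let R : [t₀,∞) → ℝ be a continuous function such that t ↦ t − nR(t) is strictly increasing and tends to ∞, and t ↦ t + mR(t) is non-decreasing. Then there exists a unique continuous non-increasing function ψ : [x₀,∞) → (0,∞), where x₀ = e^{t₀ − nR(t₀)}, such that ψ(e^{t−nR(t)}) = e^{−t−mR(t)} for all t ≥ t₀. -/
open Set Filter Real

theorem stmt4 (m n : ℕ) (hm : 0 < m) (hn : 0 < n) (t₀ : ℝ) (ht₀ : 0 ≤ t₀)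
    (R : ℝ → ℝ) (hRcont : ContinuousOn R (Set.Ici t₀))
    (hR1 : StrictMonoOn (fun t => t - (n : ℝ) * R t) (Set.Ici t₀))
    (hR2 : Filter.Tendsto (fun t => t - (n : ℝ) * R t) Filter.atTop Filter.atTop)
    (hR3 : MonotoneOn (fun t => t + (m : ℝ) * R t) (Set.Ici t₀)) :
    ∃ ψ : ℝ → ℝ,
      (ContinuousOn ψ (Set.Ici (Real.exp (t₀ - (n : ℝ) * R t₀))) ∧
        (∀ x y : ℝ, Real.exp (t₀ - (n : ℝ) * R t₀) ≤ x → x ≤ y → ψ y ≤ ψ x) ∧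
        (∀ x : ℝ, Real.exp (t₀ - (n : ℝ) * R t₀) ≤ x → 0 < ψ x) ∧
        ∀ t : ℝ, t₀ ≤ t →
          ψ (Real.exp (t - (n : ℝ) * R t)) = Real.exp (-t - (m : ℝ) * R t)) ∧
      ∀ ψ' : ℝ → ℝ,
        (ContinuousOn ψ' (Set.Ici (Real.exp (t₀ - (n : ℝ) * R t₀))) ∧
          (∀ x y : ℝ, Real.exp (t₀ - (n : ℝ) * R t₀) ≤ x → x ≤ y → ψ' y ≤ ψ' x) ∧
          (∀ x : ℝ, Real.exp (t₀ - (n : ℝ) * R t₀) ≤ x → 0 < ψ' x) ∧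
          ∀ t : ℝ, t₀ ≤ t →
            ψ' (Real.exp (t - (n : ℝ) * R t)) = Real.exp (-t - (m : ℝ) * R t)) →
        ∀ x : ℝ, Real.exp (t₀ - (n : ℝ) * R t₀) ≤ x → ψ' x = ψ x := by
  set g : ℝ → ℝ := fun t => t - (n : ℝ) * R t with hg_def
  have hgcont : ContinuousOn g (Ici t₀) :=
    continuousOn_id.sub (continuousOn_const.mul hRcont)
  have hgmono : ∀ t, t₀ ≤ t → g t₀ ≤ g t := fun t ht =>
    hR1.monotoneOn self_mem_Ici ht ht
  have hx₀pos : 0 < Real.exp (g t₀) := Real.exp_pos _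
  -- surjectivity of g onto Ici (g t₀)
  have hsurj : ∀ y, g t₀ ≤ y → ∃ t, t₀ ≤ t ∧ g t = y := by
    intro y hy
    obtain ⟨b, hb1, hb2⟩ := ((hR2.eventually_ge_atTop y).and (eventually_ge_atTop t₀)).exists
    obtain ⟨t, ht, hgt⟩ := intermediate_value_Icc hb2 (hgcont.mono Icc_subset_Ici_self)
      (show y ∈ Icc (g t₀) (g b) from ⟨hy, hb1⟩)
    exact ⟨t, ht.1, hgt⟩
  -- the order iso
  set G : Ici t₀ → Ici (g t₀) := fun t => ⟨g t, hgmono t t.2⟩ with hG_def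
  have hGmono : StrictMono G := fun a b hab =>
    Subtype.mk_lt_mk.2 (hR1 a.2 b.2 (Subtype.coe_lt_coe.2 hab))
  have hGsurj : Function.Surjective G := by
    rintro ⟨y, hy⟩
    obtain ⟨t, ht, hgt⟩ := hsurj y hy
    exact ⟨⟨t, ht⟩, Subtype.ext hgt⟩
  set e := hGmono.orderIsoOfSurjective G hGsurj with he_def
  -- the inverse parametrization
  set u : ℝ → ℝ := fun x => ((e.symm ⟨max (Real.log x) (g t₀), Set.mem_Ici.2 (le_max_right _ _)⟩ : Ici t₀) : ℝ)
    with hu_def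
  have humem : ∀ x, t₀ ≤ u x := fun x => (e.symm _).2
  have hueq : ∀ t, t₀ ≤ t → u (Real.exp (g t)) = t := by
    intro t ht
    have h1 : max (Real.log (Real.exp (g t))) (g t₀) = g t := by
      rw [Real.log_exp]; exact max_eq_left (hgmono t ht)
    have h2 : (⟨max (Real.log (Real.exp (g t))) (g t₀), Set.mem_Ici.2 (le_max_right _ _)⟩ : Ici (g t₀))
        = G ⟨t, ht⟩ := Subtype.ext h1
    simp only [hu_def, h2]
    rw [show G ⟨t, ht⟩ = e ⟨t, ht⟩ from rfl, e.symm_apply_apply]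
  have hucont : ContinuousOn u (Ici (Real.exp (g t₀))) := by
    have h0 : ContinuousOn Real.log (Ici (Real.exp (g t₀))) := by
      apply Real.continuousOn_log.mono
      intro x hx
      exact ne_of_gt (lt_of_lt_of_le hx₀pos hx)
    have h1 : ContinuousOn (fun x => max (Real.log x) (g t₀)) (Ici (Real.exp (g t₀))) :=
      h0.sup continuousOn_const
    rw [continuousOn_iff_continuous_restrict]
    have h2 : Continuous (fun x : Ici (Real.exp (g t₀)) =>
        (⟨max (Real.log ↑x) (g t₀), Set.mem_Ici.2 (le_max_right _ _)⟩ : Ici (g t₀))) :=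
      (h1.restrict).subtype_mk _
    exact continuous_subtype_val.comp (e.symm.continuous.comp h2)
  have humono : ∀ x y, Real.exp (g t₀) ≤ x → x ≤ y → u x ≤ u y := by
    intro x y hx hxy
    have : Real.log x ≤ Real.log y := Real.log_le_log (lt_of_lt_of_le hx₀pos hx) hxy
    exact Subtype.coe_le_coe.2 (e.symm.monotone (Subtype.mk_le_mk.2 (max_le_max this le_rfl)))
  refine ⟨fun x => Real.exp (-(u x + (m : ℝ) * R (u x))), ⟨?_, ?_, ?_, ?_⟩, ?_⟩
  · exact Real.continuous_exp.comp_continuousOn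
      ((hucont.add (continuousOn_const.mul
        (hRcont.comp hucont fun x _ => humem x))).neg)
  · intro x y hx hxy
    apply Real.exp_le_exp.2
    apply neg_le_neg
    exact hR3 (humem x) (humem y) (humono x y hx hxy)
  · intro x _; exact Real.exp_pos _
  · intro t ht
    simp only [show (t - (n:ℝ) * R t) = g t from rfl, hueq t ht]
    ring_nf
  · rintro ψ' ⟨-, -, -, hfe⟩ x hx
    have hlog : g t₀ ≤ Real.log x := by
      rw [← Real.log_exp (g t₀)]
      exact Real.log_le_log hx₀pos hx
    obtain ⟨t, ht, hgt⟩ := hsurj (Real.log x) hlog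
    have hxe : x = Real.exp (g t) := by rw [hgt, Real.exp_log (lt_of_lt_of_le hx₀pos hx)]
    rw [hxe, hfe t ht]
    simp only [hueq t ht]
    ring_nf
end

section
/- Let ψ : [1,∞) → (0,1] be continuous and non-increasing with associated function R satisfying ψ(e^{t−nR(t)}) = e^{−t−mR(t)} (with t ↦ t−nR(t) strictly increasing to ∞ and t ↦ t+mR(t) non-decreasing). If Y ∈ ℝ^{m×n} admits, for some T ≥ 1 and corresponding t with T = e^{t−nR(t)}, a vector (t⃗,u⃗) ∈ ℝ^{m+n} with ∑t_i = ∑u_j = t, t_i > −R(t), u_j > R(t), and a nonzero v ∈ a(t⃗,u⃗)Λ_Y with sup-norm < e^{−R(t)}, then there exist p ∈ ℤ^m, q ∈ ℤ^n\{0} with ∏_{i=1}^m |Y_i q − p_i| < ψ(T) and ∏_{j=1}^n max(|q_j|,1) < T. -/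
theorem stmt6 (m n : ℕ) (hm : 0 < m) (hn : 0 < n)
    (ψ : ℝ → ℝ) (hcont : ContinuousOn ψ (Set.Ici 1))
    (hmono : ∀ x y : ℝ, 1 ≤ x → x ≤ y → ψ y ≤ ψ x)
    (hpos : ∀ x : ℝ, 1 ≤ x → 0 < ψ x) (hone : ∀ x : ℝ, 1 ≤ x → ψ x ≤ 1)
    (R : ℝ → ℝ)
    (hR1 : StrictMonoOn (fun t => t - (n : ℝ) * R t) (Set.Ici 0))
    (hR2 : Filter.Tendsto (fun t => t - (n : ℝ) * R t) Filter.atTop Filter.atTop)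
    (hR3 : MonotoneOn (fun t => t + (m : ℝ) * R t) (Set.Ici 0))
    (hR4 : ∀ t : ℝ, 0 ≤ t →
      ψ (Real.exp (t - (n : ℝ) * R t)) = Real.exp (-t - (m : ℝ) * R t))
    (Y : Matrix (Fin m) (Fin n) ℝ) (T : ℝ) (hT : 1 ≤ T)
    (t : ℝ) (ht : 0 ≤ t) (hTt : T = Real.exp (t - (n : ℝ) * R t))
    (hdyn : ∃ (tv : Fin m → ℝ) (uv : Fin n → ℝ),
        (∑ i, tv i) = t ∧ (∑ j, uv j) = t ∧
        (∀ i, -R t < tv i) ∧ (∀ j, R t < uv j) ∧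
        ∃ (p : Fin m → ℤ) (q : Fin n → ℤ), ¬ (p = 0 ∧ q = 0) ∧
          (∀ i, |Real.exp (tv i) * ((p i : ℝ) + ∑ j, Y i j * (q j : ℝ))|
              < Real.exp (-R t)) ∧
          (∀ j, |Real.exp (-(uv j)) * (q j : ℝ)| < Real.exp (-R t))) :
    ∃ (p : Fin m → ℤ) (q : Fin n → ℤ), q ≠ 0 ∧
      (∏ i, |(∑ j, Y i j * (q j : ℝ)) - (p i : ℝ)|) < ψ T ∧
      (∏ j, max |(q j : ℝ)| 1) < T := by
  obtain ⟨tv, uv, htv, huv, htvlb, huvlb, p, q, hpq, hpb, hqb⟩ := hdyn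
  haveI : Nonempty (Fin m) := ⟨⟨0, hm⟩⟩
  haveI : Nonempty (Fin n) := ⟨⟨0, hn⟩⟩
  have hq : q ≠ 0 := by
    rintro rfl
    have hp : p ≠ 0 := fun h => hpq ⟨h, rfl⟩
    obtain ⟨i, hi⟩ := Function.ne_iff.mp hp
    have h1 := hpb i
    simp only [Pi.zero_apply, Int.cast_zero, mul_zero, Finset.sum_const_zero, add_zero] at h1
    rw [abs_mul, abs_of_pos (Real.exp_pos _)] at h1
    have hone' : (1:ℝ) ≤ |(p i : ℝ)| := by
      rw [← Int.cast_abs]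
      exact_mod_cast Int.one_le_abs (by simpa using hi)
    have h2 : Real.exp (tv i) ≤ Real.exp (tv i) * |(p i : ℝ)| :=
      le_mul_of_one_le_right (Real.exp_pos _).le hone'
    have h3 : Real.exp (-R t) < Real.exp (tv i) := Real.exp_lt_exp.mpr (htvlb i)
    linarith
  refine ⟨-p, q, hq, ?_, ?_⟩
  · have hψ : ψ T = Real.exp (-t - m * R t) := by rw [hTt]; exact hR4 t ht
    have key : ∀ i, |(∑ j, Y i j * (q j : ℝ)) - (((-p) i : ℤ) : ℝ)|
        < Real.exp (-R t - tv i) := by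
      intro i
      have h := hpb i
      rw [abs_mul, abs_of_pos (Real.exp_pos _)] at h
      have heq : |(∑ j, Y i j * (q j : ℝ)) - (((-p) i : ℤ) : ℝ)|
          = |(p i : ℝ) + ∑ j, Y i j * (q j : ℝ)| := by
        simp [sub_neg_eq_add, add_comm]
      rw [heq, Real.exp_sub]
      rw [lt_div_iff₀ (Real.exp_pos _)]
      linarith [h]
    have hprod : (∏ i, Real.exp (-R t - tv i)) = Real.exp (-t - m * R t) := by
      rw [← Real.exp_sum]
      congr 1
      rw [Finset.sum_sub_distrib, htv, Finset.sum_const, Finset.card_univ, Fintype.card_fin]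
      push_cast
      ring
    rw [hψ, ← hprod]
    by_cases hz : ∃ i, |(∑ j, Y i j * (q j : ℝ)) - (((-p) i : ℤ) : ℝ)| = 0
    · obtain ⟨i, hi⟩ := hz
      calc (∏ i, |(∑ j, Y i j * (q j : ℝ)) - (((-p) i : ℤ) : ℝ)|) = 0 :=
            Finset.prod_eq_zero (Finset.mem_univ i) hi
        _ < _ := Finset.prod_pos fun i _ => Real.exp_pos _
    · push_neg at hz
      exact Finset.prod_lt_prod_of_nonempty
        (fun i _ => (abs_nonneg _).lt_of_ne' (hz i)) (fun i _ => key i)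
        Finset.univ_nonempty
  · have key : ∀ j, max |(q j : ℝ)| 1 < Real.exp (uv j - R t) := by
      intro j
      have h := hqb j
      rw [abs_mul, abs_of_pos (Real.exp_pos _)] at h
      have h1 : |(q j : ℝ)| < Real.exp (uv j - R t) := by
        calc |(q j : ℝ)| = Real.exp (uv j) * (Real.exp (-(uv j)) * |(q j : ℝ)|) := by
              rw [← mul_assoc, ← Real.exp_add]; simp
          _ < Real.exp (uv j) * Real.exp (-R t) :=
              mul_lt_mul_of_pos_left h (Real.exp_pos _)
          _ = Real.exp (uv j - R t) := by rw [← Real.exp_add]; ring_nf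
      have h2 : (1:ℝ) < Real.exp (uv j - R t) := by
        rw [← Real.exp_zero]
        exact Real.exp_lt_exp.mpr (by linarith [huvlb j])
      exact max_lt h1 h2
    have hprod : (∏ j, Real.exp (uv j - R t)) = T := by
      rw [← Real.exp_sum, hTt]
      congr 1
      rw [Finset.sum_sub_distrib, huv, Finset.sum_const, Finset.card_univ, Fintype.card_fin]
      push_cast
      ring
    rw [← hprod]
    exact Finset.prod_lt_prod_of_nonempty
      (fun j _ => lt_max_of_lt_right one_pos) (fun j _ => key j)
      Finset.univ_nonempty
end

section
/- Let l ≥ 1, β ≥ e, 0 < κ ≤ 1, and define h_{l,β}(x) := (log max(x, e^β))^{l−1} · log⁺ log max(x, e^β) and ψ(x) := κ/(x·h_{l,β}(x)). Let R be the function associated to ψ via the Dani correspondence with (m,n) = (1,l) or (l,1) (so ψ(e^{t−nR(t)}) = e^{−t−mR(t)} with m+n = l+1). Then for all t ≥ 0: e^{(l+1)R(t)} = κ^{−1}·h_{l,β}(e^{t−nR(t)}), and moreover κ^{−1} ≤ e^{(l+1)R(t)} ≤ κ^{−1}·(max(t,β))^{l−1}·log max(t,β). In particular, R is non-decreasing.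 -/
/-- The function `h_{l,β}(x) = (log max(x, e^β))^(l-1) · log⁺ log max(x, e^β)`,
where `log⁺ y = log max(y, e)`. -/
noncomputable def hlb (l : ℕ) (β x : ℝ) : ℝ :=
  Real.log (max x (Real.exp β)) ^ (l - 1) *
    Real.log (max (Real.log (max x (Real.exp β))) (Real.exp 1))

lemma log_max_ge {β x : ℝ} (hβ : Real.exp 1 ≤ β) :
    β ≤ Real.log (max x (Real.exp β)) := by
  calc β = Real.log (Real.exp β) := (Real.log_exp β).symm
    _ ≤ _ := Real.log_le_log (Real.exp_pos β) (le_max_right _ _)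

lemma one_le_beta {β : ℝ} (hβ : Real.exp 1 ≤ β) : 1 ≤ β := by
  have := Real.add_one_le_exp 1; linarith

lemma hlb_ge_one (l : ℕ) {β : ℝ} (hβ : Real.exp 1 ≤ β) (x : ℝ) : 1 ≤ hlb l β x := by
  have h1 : (1:ℝ) ≤ Real.log (max x (Real.exp β)) :=
    le_trans (one_le_beta hβ) (log_max_ge hβ)
  have h2 : (1:ℝ) ≤ Real.log (max (Real.log (max x (Real.exp β))) (Real.exp 1)) := by
    calc (1:ℝ) = Real.log (Real.exp 1) := (Real.log_exp 1).symm
      _ ≤ _ := Real.log_le_log (Real.exp_pos 1) (le_max_right _ _)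
  have h3 : (1:ℝ) ≤ Real.log (max x (Real.exp β)) ^ (l-1) := one_le_pow₀ h1
  unfold hlb; nlinarith

lemma hlb_mono (l : ℕ) {β : ℝ} (hβ : Real.exp 1 ≤ β) : Monotone (hlb l β) := by
  intro x y hxy
  unfold hlb
  have hpos : (0:ℝ) < max x (Real.exp β) := lt_of_lt_of_le (Real.exp_pos β) (le_max_right _ _)
  have hL : Real.log (max x (Real.exp β)) ≤ Real.log (max y (Real.exp β)) :=
    Real.log_le_log hpos (max_le_max hxy le_rfl)
  have h1 : (1:ℝ) ≤ Real.log (max x (Real.exp β)) :=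
    le_trans (one_le_beta hβ) (log_max_ge hβ)
  have h2 : (0:ℝ) < max (Real.log (max x (Real.exp β))) (Real.exp 1) :=
    lt_of_lt_of_le (Real.exp_pos 1) (le_max_right _ _)
  apply mul_le_mul (pow_le_pow_left₀ (by linarith) hL _)
    (Real.log_le_log h2 (max_le_max hL le_rfl))
    (Real.log_nonneg (le_trans (by nlinarith [Real.add_one_le_exp 1]) (le_max_right _ _)))
    (pow_nonneg (by linarith) _)

theorem stmt7 (l : ℕ) (hl : 1 ≤ l) (β κ : ℝ) (hβ : Real.exp 1 ≤ β)
    (hκ0 : 0 < κ) (hκ1 : κ ≤ 1)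
    (m n : ℕ) (hmn : (m = 1 ∧ n = l) ∨ (m = l ∧ n = 1))
    (R : ℝ → ℝ)
    (hRcont : ContinuousOn R (Set.Ici 0))
    (hR1 : StrictMonoOn (fun t => t - (n : ℝ) * R t) (Set.Ici 0))
    (hR2 : Filter.Tendsto (fun t => t - (n : ℝ) * R t) Filter.atTop Filter.atTop)
    (hR3 : MonotoneOn (fun t => t + (m : ℝ) * R t) (Set.Ici 0))
    (hR4 : ∀ t : ℝ, 0 ≤ t →
      κ / (Real.exp (t - (n : ℝ) * R t) * hlb l β (Real.exp (t - (n : ℝ) * R t)))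
        = Real.exp (-t - (m : ℝ) * R t)) :
    (∀ t : ℝ, 0 ≤ t →
        Real.exp ((l + 1 : ℝ) * R t) = κ⁻¹ * hlb l β (Real.exp (t - (n : ℝ) * R t)) ∧
        κ⁻¹ ≤ Real.exp ((l + 1 : ℝ) * R t) ∧
        Real.exp ((l + 1 : ℝ) * R t)
          ≤ κ⁻¹ * max t β ^ (l - 1) * Real.log (max t β)) ∧
      MonotoneOn R (Set.Ici 0) := by
  have hsum : (m:ℝ) + (n:ℝ) = (l:ℝ) + 1 := by
    rcases hmn with ⟨hm, hn⟩ | ⟨hm, hn⟩ <;> subst hm <;> subst hn <;> push_cast <;> ring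
  -- Part 1 as a standalone claim
  have part1 : ∀ t : ℝ, 0 ≤ t →
      Real.exp ((l + 1 : ℝ) * R t) = κ⁻¹ * hlb l β (Real.exp (t - (n : ℝ) * R t)) := by
    intro t ht
    have h4 := hR4 t ht
    have hhpos : 0 < hlb l β (Real.exp (t - (n:ℝ) * R t)) :=
      lt_of_lt_of_le one_pos (hlb_ge_one l hβ _)
    have hne : Real.exp (t - (n:ℝ) * R t) * hlb l β (Real.exp (t - (n:ℝ) * R t)) ≠ 0 :=
      (mul_pos (Real.exp_pos _) hhpos).ne'
    rw [div_eq_iff hne] at h4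
    -- κ = e^{-t-mR} (e^{t-nR} h)
    have key : Real.exp ((l + 1 : ℝ) * R t) * κ = hlb l β (Real.exp (t - (n:ℝ) * R t)) := by
      rw [h4]
      have : Real.exp ((l + 1 : ℝ) * R t) * Real.exp (-t - (m:ℝ) * R t)
          * Real.exp (t - (n:ℝ) * R t)
          = Real.exp ((l + 1 : ℝ) * R t + (-t - (m:ℝ) * R t) + (t - (n:ℝ) * R t)) := by
        rw [Real.exp_add, Real.exp_add]
      have hz : ((l:ℝ) + 1) * R t + (-t - (m:ℝ) * R t) + (t - (n:ℝ) * R t) = 0 := by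
        linear_combination R t * hsum.symm
      calc Real.exp ((l + 1 : ℝ) * R t) *
            (Real.exp (-t - (m:ℝ) * R t) * (Real.exp (t - (n:ℝ) * R t)
              * hlb l β (Real.exp (t - (n:ℝ) * R t))))
          = (Real.exp ((l + 1 : ℝ) * R t) * Real.exp (-t - (m:ℝ) * R t)
              * Real.exp (t - (n:ℝ) * R t)) * hlb l β (Real.exp (t - (n:ℝ) * R t)) := by ring
        _ = Real.exp 0 * hlb l β (Real.exp (t - (n:ℝ) * R t)) := by rw [this, hz]
        _ = hlb l β (Real.exp (t - (n:ℝ) * R t)) := by rw [Real.exp_zero, one_mul]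
    field_simp
    have e : t - R t * (n:ℝ) = t - (n:ℝ) * R t := by ring
    rw [e]; linarith [key]
  constructor
  · intro t ht
    refine ⟨part1 t ht, ?_, ?_⟩
    · rw [part1 t ht]
      have := hlb_ge_one l hβ (Real.exp (t - (n:ℝ) * R t))
      nlinarith [inv_pos.mpr hκ0]
    · -- upper bound
      have hR0 : 0 ≤ R t := by
        have h1 := part1 t ht
        have hh := hlb_ge_one l hβ (Real.exp (t - (n:ℝ) * R t))
        have hκinv : (1:ℝ) ≤ κ⁻¹ := by
          have h := mul_inv_cancel₀ hκ0.ne'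
          nlinarith [inv_pos.mpr hκ0]
        have hone : (1:ℝ) ≤ Real.exp ((l + 1 : ℝ) * R t) := by rw [h1]; nlinarith
        have h2 : (0:ℝ) ≤ ((l:ℝ) + 1) * R t := Real.one_le_exp_iff.mp hone
        have hlpos : (0:ℝ) < (l:ℝ) + 1 := by positivity
        nlinarith
      rw [part1 t ht]
      have hs : t - (n:ℝ) * R t ≤ t := by
        have : (0:ℝ) ≤ (n:ℝ) * R t := mul_nonneg (Nat.cast_nonneg n) hR0
        linarith
      -- compute hlb at exp s
      set s := t - (n:ℝ) * R t with hsdef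
      have hmaxexp : max (Real.exp s) (Real.exp β) = Real.exp (max s β) :=
        (Real.exp_monotone.map_max).symm
      have hM1 : (1:ℝ) ≤ max s β := le_trans (one_le_beta hβ) (le_max_right _ _)
      have hMe : Real.exp 1 ≤ max s β := le_trans hβ (le_max_right _ _)
      have hval : hlb l β (Real.exp s) = (max s β) ^ (l-1) * Real.log (max s β) := by
        unfold hlb
        rw [hmaxexp, Real.log_exp, max_eq_left hMe]
      rw [hval]
      have hM' : max s β ≤ max t β := max_le_max hs le_rfl
      have hM1' : (1:ℝ) ≤ max t β := le_trans hM1 hM'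
      have hlog : Real.log (max s β) ≤ Real.log (max t β) :=
        Real.log_le_log (by linarith) hM'
      have hκinv : (0:ℝ) < κ⁻¹ := inv_pos.mpr hκ0
      have hmul : (max s β) ^ (l-1) * Real.log (max s β)
          ≤ (max t β) ^ (l-1) * Real.log (max t β) :=
        mul_le_mul (pow_le_pow_left₀ (by linarith) hM' _) hlog
          (Real.log_nonneg hM1) (pow_nonneg (by linarith) _)
      calc κ⁻¹ * ((max s β) ^ (l-1) * Real.log (max s β))
          ≤ κ⁻¹ * ((max t β) ^ (l-1) * Real.log (max t β)) := by
            exact mul_le_mul_of_nonneg_left hmul hκinv.le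
        _ = κ⁻¹ * max t β ^ (l-1) * Real.log (max t β) := by ring
  · -- monotone
    intro a ha b hb hab
    have h1 := part1 a ha
    have h2 := part1 b hb
    have hκinv : (0:ℝ) < κ⁻¹ := inv_pos.mpr hκ0
    have hse : a - (n:ℝ) * R a ≤ b - (n:ℝ) * R b := hR1.monotoneOn ha hb hab
    have hmono : hlb l β (Real.exp (a - (n:ℝ) * R a)) ≤ hlb l β (Real.exp (b - (n:ℝ) * R b)) :=
      hlb_mono l hβ (Real.exp_le_exp.mpr hse)
    have : Real.exp ((l + 1 : ℝ) * R a) ≤ Real.exp ((l + 1 : ℝ) * R b) := by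
      rw [h1, h2]; exact mul_le_mul_of_nonneg_left hmono hκinv.le
    have hle := Real.exp_le_exp.mp this
    have hlpos : (0:ℝ) < (l:ℝ) + 1 := by positivity
    exact (mul_le_mul_iff_right₀ hlpos).mp hle
end

section
/- Let l ≥ 1, β ≥ e, and 0 < κ ≤ 1 with |log κ| ≤ e^β. Let R and R* be the functions associated via the Dani correspondence to ψ(x) = κ/(x·h_{l,β}(x)) for (m,n) = (l,1) and (m,n) = (1,l) respectively, where h_{l,β}(x) := (log max(x,e^β))^{l−1}·log⁺log max(x,e^β). Then there is a constant C depending only on l such that |R(t) − R*(t)| ≤ C·β for all t ≥ 0. -/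
private lemma hlb_exp_eq (l : ℕ) {β : ℝ} (hβ : Real.exp 1 ≤ β) (u : ℝ) :
    hlb l β (Real.exp u) = max u β ^ (l - 1) * Real.log (max u β) := by
  have h1 : max (Real.exp u) (Real.exp β) = Real.exp (max u β) :=
    (Real.exp_monotone.map_max).symm
  have h2 : Real.exp 1 ≤ max u β := le_trans hβ (le_max_right _ _)
  rw [hlb, h1, Real.log_exp, max_eq_left h2]

private lemma key_id {l : ℕ} {β κ t c x : ℝ} (hβ : Real.exp 1 ≤ β) (hκ : 0 < κ)
    (heq : κ / (Real.exp (t - c) * hlb l β (Real.exp (t - c))) = Real.exp (-t - x)) :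
    c + x = ((l - 1 : ℕ) : ℝ) * Real.log (max (t - c) β)
      + Real.log (Real.log (max (t - c) β)) - Real.log κ := by
  set u := t - c with hu
  set M := max u β with hM
  have hMe : Real.exp 1 ≤ M := le_trans hβ (le_max_right _ _)
  have hM0 : 0 < M := lt_of_lt_of_le (Real.exp_pos 1) hMe
  have hlM : 1 ≤ Real.log M := (Real.le_log_iff_exp_le hM0).2 hMe
  have hlM0 : 0 < Real.log M := lt_of_lt_of_le one_pos hlM
  have hh : hlb l β (Real.exp u) = M ^ (l - 1) * Real.log M := hlb_exp_eq l hβ u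
  have hhpos : 0 < hlb l β (Real.exp u) := by rw [hh]; positivity
  have hden : (Real.exp u * hlb l β (Real.exp u)) ≠ 0 :=
    (mul_pos (Real.exp_pos u) hhpos).ne'
  have hκeq : κ = Real.exp (-t - x) * (Real.exp u * hlb l β (Real.exp u)) :=
    (div_eq_iff hden).1 heq
  have hlog := congrArg Real.log hκeq
  rw [Real.log_mul (Real.exp_ne_zero _) hden,
      Real.log_mul (Real.exp_ne_zero _) hhpos.ne', Real.log_exp, Real.log_exp, hh,
      Real.log_mul (by positivity) hlM0.ne', Real.log_pow] at hlog
  have : u = t - c := hu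
  linarith [hlog]

private lemma aux_nonneg {l r : ℝ} (hl : 1 ≤ l) (h : 0 ≤ r + l * r) : 0 ≤ r := by
  nlinarith

private lemma aux_le {l x y : ℝ} (hl : 1 ≤ l) (h : x + l * x ≤ y + l * y) : x ≤ y := by
  nlinarith

private lemma aux_final {l β r s : ℝ} (hl : 1 ≤ l) (hβ : 1 ≤ β)
    (h : r + l * r ≤ l * s + s + l * (l + β)) (hrs : s ≤ r) :
    r - s ≤ (l * (l + 1) + 1) * β := by
  have hd0 : 0 ≤ r - s := by linarith
  have h1 : r - s ≤ l * (r - s) := le_mul_of_one_le_left hd0 hl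
  have h2 : l * l ≤ l * l * β := le_mul_of_one_le_right (by nlinarith) hβ
  nlinarith
theorem stmt9 (l : ℕ) (hl : 1 ≤ l) :
    ∃ C : ℝ, 0 < C ∧
      ∀ (β κ : ℝ), Real.exp 1 ≤ β → 0 < κ → κ ≤ 1 → |Real.log κ| ≤ Real.exp β →
      ∀ R Rs : ℝ → ℝ,
        -- `R` : Dani correspondence function for `(m, n) = (l, 1)`
        (ContinuousOn R (Set.Ici 0) ∧
          StrictMonoOn (fun t => t - R t) (Set.Ici 0) ∧
          Filter.Tendsto (fun t => t - R t) Filter.atTop Filter.atTop ∧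
          MonotoneOn (fun t => t + (l : ℝ) * R t) (Set.Ici 0) ∧
          ∀ t : ℝ, 0 ≤ t →
            κ / (Real.exp (t - R t) * hlb l β (Real.exp (t - R t)))
              = Real.exp (-t - (l : ℝ) * R t)) →
        -- `Rs` : Dani correspondence function for `(m, n) = (1, l)`
        (ContinuousOn Rs (Set.Ici 0) ∧
          StrictMonoOn (fun t => t - (l : ℝ) * Rs t) (Set.Ici 0) ∧
          Filter.Tendsto (fun t => t - (l : ℝ) * Rs t) Filter.atTop Filter.atTop ∧
          MonotoneOn (fun t => t + Rs t) (Set.Ici 0) ∧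
          ∀ t : ℝ, 0 ≤ t →
            κ / (Real.exp (t - (l : ℝ) * Rs t) * hlb l β (Real.exp (t - (l : ℝ) * Rs t)))
              = Real.exp (-t - Rs t)) →
        ∀ t : ℝ, 0 ≤ t → |R t - Rs t| ≤ C * β := by
  refine ⟨(l : ℝ) * ((l : ℝ) + 1) + 1, by positivity, ?_⟩
  intro β κ hβ hκ0 hκ1 hκβ R Rs hR hRs t ht
  obtain ⟨-, -, -, -, hReq⟩ := hR
  obtain ⟨-, -, -, -, hRseq⟩ := hRs
  have hl1 : (1 : ℝ) ≤ (l : ℝ) := by exact_mod_cast hl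
  have he2 : (2 : ℝ) ≤ Real.exp 1 := by linarith [Real.add_one_le_exp (1 : ℝ)]
  have hβ1 : (1 : ℝ) ≤ β := by linarith
  have hβ0 : (0 : ℝ) < β := by linarith
  have hcast : ((l - 1 : ℕ) : ℝ) = (l : ℝ) - 1 := by
    rw [Nat.cast_sub hl]; norm_num
  have e1 := key_id (l := l) hβ hκ0 (hReq t ht)
  have e2 := key_id (l := l) hβ hκ0 (hRseq t ht)
  rw [hcast] at e1 e2
  set r := R t with hr
  set s := Rs t with hs
  set a := t - r with ha
  set b := t - (l : ℝ) * s with hb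
  set A := max a β with hA
  set B := max b β with hB
  set La := Real.log A with hLa
  set Lb := Real.log B with hLb
  -- basic positivity facts
  have hAe : Real.exp 1 ≤ A := le_trans hβ (le_max_right _ _)
  have hBe : Real.exp 1 ≤ B := le_trans hβ (le_max_right _ _)
  have hA0 : 0 < A := lt_of_lt_of_le (Real.exp_pos 1) hAe
  have hB0 : 0 < B := lt_of_lt_of_le (Real.exp_pos 1) hBe
  have hAβ : β ≤ A := le_max_right _ _
  have hBβ : β ≤ B := le_max_right _ _
  have hLa1 : 1 ≤ La := (Real.le_log_iff_exp_le hA0).2 hAe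
  have hLb1 : 1 ≤ Lb := (Real.le_log_iff_exp_le hB0).2 hBe
  have hLa0 : 0 < La := by linarith
  have hLb0 : 0 < Lb := by linarith
  have hlogLa0 : 0 ≤ Real.log La := Real.log_nonneg hLa1
  have hlogLb0 : 0 ≤ Real.log Lb := Real.log_nonneg hLb1
  have hκlog : Real.log κ ≤ 0 := Real.log_nonpos hκ0.le hκ1
  have hκexp : -Real.log κ ≤ Real.exp β := by
    have := (abs_le.1 hκβ).1; linarith
  -- nonnegativity of r and s
  have hr0 : 0 ≤ r := by
    refine aux_nonneg hl1 ?_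
    have h1 : 0 ≤ ((l : ℝ) - 1) * La := mul_nonneg (by linarith) (by linarith)
    linarith
  have hs0 : 0 ≤ s := by
    refine aux_nonneg hl1 ?_
    have h1 : 0 ≤ ((l : ℝ) - 1) * Lb := mul_nonneg (by linarith) (by linarith)
    linarith
  rcases le_or_gt a b with hab | hab
  · -- Case a ≤ b : forces r = s
    have hAB : A ≤ B := max_le_max hab le_rfl
    have hLaLb : La ≤ Lb := Real.log_le_log hA0 hAB
    have hllog : Real.log La ≤ Real.log Lb := Real.log_le_log hLa0 hLaLb
    have hrles : r ≤ s := by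
      refine aux_le hl1 ?_
      have h1 : ((l : ℝ) - 1) * La ≤ ((l : ℝ) - 1) * Lb :=
        mul_le_mul_of_nonneg_left hLaLb (by linarith)
      linarith
    have hsler : s ≤ r := by
      have h1 : (l : ℝ) * s ≤ r := by
        have h2 : a ≤ b := hab
        rw [ha, hb] at h2; linarith
      have h3 : 1 * s ≤ (l : ℝ) * s := mul_le_mul_of_nonneg_right hl1 hs0
      linarith
    have heq : r = s := le_antisymm hrles hsler
    rw [heq, sub_self, abs_zero]
    positivity
  · -- Case b < a
    have hBA : B ≤ A := max_le_max hab.le le_rfl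
    have hLbLa : Lb ≤ La := Real.log_le_log hB0 hBA
    have hllog : Real.log Lb ≤ Real.log La := Real.log_le_log hLb0 hLbLa
    have hsler : s ≤ r := by
      refine aux_le hl1 ?_
      have h1 : ((l : ℝ) - 1) * Lb ≤ ((l : ℝ) - 1) * La :=
        mul_le_mul_of_nonneg_left hLbLa (by linarith)
      linarith
    -- Step 1 : log La - log Lb ≤ La - Lb
    have step1 : Real.log La - Real.log Lb ≤ La - Lb := by
      have h1 : Real.log La - Real.log Lb = Real.log (La / Lb) :=
        (Real.log_div hLa0.ne' hLb0.ne').symm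
      have h2 : Real.log (La / Lb) ≤ La / Lb - 1 :=
        Real.log_le_sub_one_of_pos (div_pos hLa0 hLb0)
      have h3 : La / Lb - 1 = (La - Lb) / Lb := by field_simp
      have h4 : (La - Lb) / Lb ≤ La - Lb := div_le_self (by linarith) hLb1
      linarith
    -- a - b ≤ l*s + s
    have habs : a - b ≤ (l : ℝ) * s + s := by
      have h1 : a - b = (l : ℝ) * s - r := by rw [ha, hb]; ring
      linarith
    -- bound on s
    have hLbB : Lb ≤ B := by
      have := Real.log_le_sub_one_of_pos hB0; linarith
    have hsb : (l : ℝ) * s + s ≤ (l : ℝ) * Lb + Real.exp β := by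
      have hlb2 : Real.log Lb ≤ Lb := by
        have := Real.log_le_sub_one_of_pos hLb0; linarith
      have h1 : ((l : ℝ) - 1) * Lb = (l : ℝ) * Lb - Lb := by ring
      linarith
    -- A ≤ (1 + l + e^β/β) * B
    have hexpβB : Real.exp β ≤ (Real.exp β / β) * B := by
      have h1 : (Real.exp β / β) * β ≤ (Real.exp β / β) * B :=
        mul_le_mul_of_nonneg_left hBβ (le_of_lt (div_pos (Real.exp_pos β) hβ0))
      have h2 : (Real.exp β / β) * β = Real.exp β := by field_simp
      linarith
    have hAbound : A ≤ (1 + (l : ℝ) + Real.exp β / β) * B := by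
      have h1 : A ≤ B + (a - b) := by
        apply max_le
        · linarith [le_max_left b β, hab.le]
        · linarith [hab.le]
      have h3 : (l : ℝ) * Lb ≤ (l : ℝ) * B :=
        mul_le_mul_of_nonneg_left hLbB (by linarith)
      have h4 : (1 + (l : ℝ) + Real.exp β / β) * B
          = B + (l : ℝ) * B + (Real.exp β / β) * B := by ring
      linarith
    -- (1 + l + e^β/β) ≤ (1 + l) * e^β
    have hcb : 1 + (l : ℝ) + Real.exp β / β ≤ (1 + (l : ℝ)) * Real.exp β := by
      have h1 : Real.exp β / β ≤ Real.exp β := div_le_self (Real.exp_pos β).le hβ1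
      have h2 : (2 : ℝ) ≤ Real.exp β := by linarith [Real.add_one_le_exp β]
      have h3 : (l : ℝ) * 2 ≤ (l : ℝ) * Real.exp β :=
        mul_le_mul_of_nonneg_left h2 (by linarith)
      have h4 : (1 + (l : ℝ)) * Real.exp β = Real.exp β + (l : ℝ) * Real.exp β := by
        ring
      linarith
    have hcb0 : (0 : ℝ) < 1 + (l : ℝ) + Real.exp β / β := by positivity
    -- La ≤ log(1+l) + β + Lb
    have hLaUp : La ≤ Real.log (1 + (l : ℝ)) + β + Lb := by
      have h1 : La ≤ Real.log ((1 + (l : ℝ) + Real.exp β / β) * B) :=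
        Real.log_le_log hA0 hAbound
      have h2 : Real.log ((1 + (l : ℝ) + Real.exp β / β) * B)
          = Real.log (1 + (l : ℝ) + Real.exp β / β) + Lb := by
        rw [Real.log_mul hcb0.ne' hB0.ne']
      have h3 : Real.log (1 + (l : ℝ) + Real.exp β / β)
          ≤ Real.log ((1 + (l : ℝ)) * Real.exp β) := Real.log_le_log hcb0 hcb
      have h4 : Real.log ((1 + (l : ℝ)) * Real.exp β)
          = Real.log (1 + (l : ℝ)) + β := by
        rw [Real.log_mul (by positivity) (Real.exp_ne_zero β), Real.log_exp]
      linarith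
    have hlogl : Real.log (1 + (l : ℝ)) ≤ (l : ℝ) := by
      have := Real.log_le_sub_one_of_pos (show (0:ℝ) < 1 + (l:ℝ) by positivity)
      linarith
    -- combine
    have hLd : La - Lb ≤ (l : ℝ) + β := by linarith
    have hfin : r + (l : ℝ) * r ≤ (l : ℝ) * s + s + (l : ℝ) * ((l : ℝ) + β) := by
      have hd1 : ((l : ℝ) - 1) * La - ((l : ℝ) - 1) * Lb
          = (l : ℝ) * (La - Lb) - (La - Lb) := by ring
      have hmul : (l : ℝ) * (La - Lb) ≤ (l : ℝ) * ((l : ℝ) + β) :=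
        mul_le_mul_of_nonneg_left hLd (by linarith)
      linarith
    rw [abs_of_nonneg (by linarith : (0:ℝ) ≤ r - s)]
    have := aux_final hl1 hβ1 hfin hsler
    linarith
end

section
/- Let m, n ∈ ℕ and Y ∈ ℝ^{m×n}. Define a_t := diag(e^{t/m},…,e^{t/m}, e^{−t/n},…,e^{−t/n}) (m copies of e^{t/m}, n copies of e^{−t/n}) and Λ_Y the lattice spanned by the columns of the block matrix with I_m, Y on top and 0, I_n below. Then Y is badly approximable — i.e. there exists c > 0 such that for all T ≥ 1 there is no solution p ∈ ℤ^m, q ∈ ℤ^n\{0} to ‖Yq − p‖_∞^m < c/T and ‖q‖_∞^n < T — if and only if inf_{t ≥ 0} δ(a_t Λ_Y) > 0, where δ denotes the sup-norm first minimum. -/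
private lemma exp_div_pow (t : ℝ) (m : ℕ) (hm : 0 < m) :
    Real.exp (t / m) ^ m = Real.exp t := by
  rw [← Real.exp_nat_mul]; congr 1; field_simp

theorem stmt19 (m n : ℕ) (hm : 0 < m) (hn : 0 < n)
    (Y : Matrix (Fin m) (Fin n) ℝ) :
    -- `Y` is badly approximable
    (∃ c : ℝ, 0 < c ∧ ∀ T : ℝ, 1 ≤ T →
        ¬ ∃ (p : Fin m → ℤ) (q : Fin n → ℤ), q ≠ 0 ∧
          (‖fun i => (∑ j, Y i j * (q j : ℝ)) - (p i : ℝ)‖ : ℝ) ^ m < c / T ∧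
          (‖fun j => (q j : ℝ)‖ : ℝ) ^ n < T)
      ↔
    -- the `a_t`-orbit of `Λ_Y` has first minima bounded away from zero
    (∃ ε : ℝ, 0 < ε ∧ ∀ t : ℝ, 0 ≤ t →
        ∀ (p : Fin m → ℤ) (q : Fin n → ℤ), ¬ (p = 0 ∧ q = 0) →
          (∃ i, ε ≤ |Real.exp (t / m) * ((p i : ℝ) + ∑ j, Y i j * (q j : ℝ))|) ∨
          (∃ j, ε ≤ |Real.exp (-(t / n)) * (q j : ℝ)|)) := by
  constructor
  · rintro ⟨c, hc, hBA⟩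
    refine ⟨min 1 c, lt_min one_pos hc, ?_⟩
    set ε := min 1 c with hεdef
    have hε : 0 < ε := lt_min one_pos hc
    have hε1 : ε ≤ 1 := min_le_left _ _
    have hεc : ε ≤ c := min_le_right _ _
    intro t ht p q hpq
    by_contra hcon
    push_neg at hcon
    obtain ⟨h1, h2⟩ := hcon
    by_cases hq : q = 0
    · -- then p ≠ 0, get a contradiction from h1
      have hp : p ≠ 0 := fun hp => hpq ⟨hp, hq⟩
      obtain ⟨i, hi⟩ := Function.ne_iff.mp hp
      have h1i := h1 i
      have hsum : (∑ j, Y i j * (q j : ℝ)) = 0 := by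
        simp [hq]
      rw [hsum, add_zero] at h1i
      have hpi : (1 : ℝ) ≤ |(p i : ℝ)| := by
        exact_mod_cast Int.one_le_abs hi
      have hexp : (1 : ℝ) ≤ Real.exp (t / m) := by
        apply Real.one_le_exp
        positivity
      have : (1 : ℝ) ≤ |Real.exp (t / m) * (p i : ℝ)| := by
        rw [abs_mul, abs_of_pos (Real.exp_pos _)]
        nlinarith [abs_nonneg ((p i : ℝ))]
      linarith [h1i]
    · -- q ≠ 0
      obtain ⟨j0, hj0⟩ := Function.ne_iff.mp hq
      have hqj0 : (1 : ℝ) ≤ |(q j0 : ℝ)| := by exact_mod_cast Int.one_le_abs hj0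
      -- |q j| < ε * exp (t/n) for all j
      have hqlt : ∀ j, |(q j : ℝ)| < ε * Real.exp (t / n) := by
        intro j
        have := h2 j
        rw [abs_mul, abs_of_pos (Real.exp_pos _), Real.exp_neg] at this
        have hpos := Real.exp_pos (t / n)
        rw [inv_mul_lt_iff₀ hpos] at this
        linarith [this]
      -- 1 < ε * exp(t/n), hence T := ε^n * exp t > 1
      have h1lt : (1 : ℝ) < ε * Real.exp (t / n) := lt_of_le_of_lt hqj0 (hqlt j0)
      set T : ℝ := ε ^ n * Real.exp t with hTdef
      have hTval : (ε * Real.exp (t / n)) ^ n = T := by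
        rw [mul_pow, exp_div_pow t n hn]
      have hT1 : (1 : ℝ) < T := by
        rw [← hTval]
        calc (1:ℝ) = 1 ^ n := (one_pow n).symm
        _ < (ε * Real.exp (t / n)) ^ n :=
          pow_lt_pow_left₀ h1lt zero_le_one hn.ne'
      have hTpos : 0 < T := lt_trans one_pos hT1
      apply hBA T hT1.le
      refine ⟨-p, q, hq, ?_, ?_⟩
      · -- the norm bound on Yq - (-p)
        have hcomp : ∀ i, |(∑ j, Y i j * (q j : ℝ)) - ((-p) i : ℝ)| <
            ε * Real.exp (-(t / m)) := by
          intro i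
          have := h1 i
          rw [abs_mul, abs_of_pos (Real.exp_pos _)] at this
          have hpos := Real.exp_pos (t / m)
          have hlt : |(p i : ℝ) + ∑ j, Y i j * (q j : ℝ)| < ε / Real.exp (t / m) := by
            rw [lt_div_iff₀ hpos]
            linarith [this]
          rw [Real.exp_neg, ← one_div, mul_one_div]
          calc |(∑ j, Y i j * (q j : ℝ)) - ((-p) i : ℝ)|
              = |(p i : ℝ) + ∑ j, Y i j * (q j : ℝ)| := by
                simp only [Pi.neg_apply, Int.cast_neg, sub_neg_eq_add]
                rw [add_comm]
          _ < ε / Real.exp (t / m) := hlt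
          _ = ε / Real.exp (t / m) := rfl
        have hb : (0 : ℝ) < ε * Real.exp (-(t / m)) := by positivity
        have hnorm : ‖fun i => (∑ j, Y i j * (q j : ℝ)) - (((-p) i : ℤ) : ℝ)‖ <
            ε * Real.exp (-(t / m)) := by
          rw [pi_norm_lt_iff hb]
          intro i
          simpa [Real.norm_eq_abs] using hcomp i
        have hpow : ‖fun i => (∑ j, Y i j * (q j : ℝ)) - (((-p) i : ℤ) : ℝ)‖ ^ m <
            (ε * Real.exp (-(t / m))) ^ m :=
          pow_lt_pow_left₀ hnorm (norm_nonneg _) hm.ne'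
        have heq : (ε * Real.exp (-(t / m))) ^ m = ε ^ m * Real.exp (-t) := by
          rw [mul_pow]
          congr 1
          have : -(t / m) = (-t) / m := by ring
          rw [this, exp_div_pow]
          exact hm
        have hle : ε ^ m * Real.exp (-t) ≤ c / T := by
          rw [le_div_iff₀ hTpos, hTdef]
          have : ε ^ m * Real.exp (-t) * (ε ^ n * Real.exp t) = ε ^ (m + n) := by
            rw [pow_add, Real.exp_neg]
            field_simp
          rw [this]
          calc ε ^ (m + n) ≤ ε ^ 1 := pow_le_pow_of_le_one hε.le hε1 (by omega)
          _ = ε := pow_one ε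
          _ ≤ c := hεc
        calc ‖fun i => (∑ j, Y i j * (q j : ℝ)) - (((-p) i : ℤ) : ℝ)‖ ^ m
            < (ε * Real.exp (-(t / m))) ^ m := hpow
        _ = ε ^ m * Real.exp (-t) := heq
        _ ≤ c / T := hle
      · -- ‖q‖ ^ n < T
        have hb : (0 : ℝ) < ε * Real.exp (t / n) := by positivity
        have hnorm : ‖fun j => ((q j : ℤ) : ℝ)‖ < ε * Real.exp (t / n) := by
          rw [pi_norm_lt_iff hb]
          intro j
          simpa [Real.norm_eq_abs] using hqlt j
        calc ‖fun j => ((q j : ℤ) : ℝ)‖ ^ n < (ε * Real.exp (t / n)) ^ n :=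
            pow_lt_pow_left₀ hnorm (norm_nonneg _) hn.ne'
        _ = T := hTval
  · rintro ⟨ε, hε, hδ⟩
    set ε' := min ε 1 with hε'def
    have hε'pos : 0 < ε' := lt_min hε one_pos
    have hε'le : ε' ≤ ε := min_le_left _ _
    have hε'1 : ε' ≤ 1 := min_le_right _ _
    refine ⟨ε' ^ (m + n), pow_pos hε'pos _, ?_⟩
    intro T hT
    rintro ⟨p, q, hq, hA, hB⟩
    have hTpos : (0 : ℝ) < T := lt_of_lt_of_le one_pos hT
    have hεnpos : (0 : ℝ) < ε' ^ n := pow_pos hε'pos _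
    have hquot : (1 : ℝ) ≤ T / ε' ^ n := by
      rw [le_div_iff₀ hεnpos]
      rw [one_mul]
      exact le_trans (pow_le_one₀ hε'pos.le hε'1) hT
    set t := Real.log (T / ε' ^ n) with htdef
    have ht : 0 ≤ t := Real.log_nonneg hquot
    have het : Real.exp t = T / ε' ^ n :=
      Real.exp_log (lt_of_lt_of_le one_pos hquot)
    have hpq : ¬ ((-p) = 0 ∧ q = 0) := fun h => hq h.2
    have hdisj := hδ t ht (-p) q hpq
    -- show each alternative is impossible
    have hAc : ∀ i, |Real.exp (t / m) * (((-p) i : ℝ) + ∑ j, Y i j * (q j : ℝ))| < ε' := by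
      -- first: exp(t/m) * ‖Yq - p‖ < ε'
      have key : Real.exp (t / m) * ‖fun i => (∑ j, Y i j * (q j : ℝ)) - ((p i : ℤ) : ℝ)‖ < ε' := by
        apply lt_of_pow_lt_pow_left₀ m hε'pos.le
        rw [mul_pow, exp_div_pow t m hm]
        have h1 : ‖fun i => (∑ j, Y i j * (q j : ℝ)) - ((p i : ℤ) : ℝ)‖ ^ m <
            ε' ^ (m + n) / T := hA
        calc Real.exp t * ‖fun i => (∑ j, Y i j * (q j : ℝ)) - ((p i : ℤ) : ℝ)‖ ^ m
            < Real.exp t * (ε' ^ (m + n) / T) := by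
              exact (mul_lt_mul_iff_right₀ (Real.exp_pos t)).mpr h1
        _ = ε' ^ m := by
              rw [het, pow_add]
              field_simp
        _ = ε' ^ m := rfl
      intro i
      have hle : |(((-p) i : ℝ)) + ∑ j, Y i j * (q j : ℝ)| ≤
          ‖fun i => (∑ j, Y i j * (q j : ℝ)) - ((p i : ℤ) : ℝ)‖ := by
        have := norm_le_pi_norm (fun i => (∑ j, Y i j * (q j : ℝ)) - ((p i : ℤ) : ℝ)) i
        rw [Real.norm_eq_abs] at this
        calc |(((-p) i : ℝ)) + ∑ j, Y i j * (q j : ℝ)|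
            = |(∑ j, Y i j * (q j : ℝ)) - ((p i : ℤ) : ℝ)| := by
              simp only [Pi.neg_apply, Int.cast_neg]
              rw [add_comm, ← sub_eq_add_neg]
        _ ≤ _ := this
      rw [abs_mul, abs_of_pos (Real.exp_pos _)]
      calc Real.exp (t / m) * |(((-p) i : ℝ)) + ∑ j, Y i j * (q j : ℝ)|
          ≤ Real.exp (t / m) * ‖fun i => (∑ j, Y i j * (q j : ℝ)) - ((p i : ℤ) : ℝ)‖ := by
            exact mul_le_mul_of_nonneg_left hle (Real.exp_pos _).le
      _ < ε' := key
    have hBc : ∀ j, |Real.exp (-(t / n)) * ((q j : ℤ) : ℝ)| < ε' := by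
      have key : Real.exp (-(t / n)) * ‖fun j => ((q j : ℤ) : ℝ)‖ < ε' := by
        apply lt_of_pow_lt_pow_left₀ n hε'pos.le
        rw [mul_pow]
        have hexppow : Real.exp (-(t / n)) ^ n = Real.exp (-t) := by
          have : -(t / n) = (-t) / n := by ring
          rw [this, exp_div_pow _ _ hn]
        rw [hexppow]
        calc Real.exp (-t) * ‖fun j => ((q j : ℤ) : ℝ)‖ ^ n
            < Real.exp (-t) * T := by
              exact (mul_lt_mul_iff_right₀ (Real.exp_pos _)).mpr hB
        _ = ε' ^ n := by
              rw [Real.exp_neg, het]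
              field_simp
      intro j
      have hle : |((q j : ℤ) : ℝ)| ≤ ‖fun j => ((q j : ℤ) : ℝ)‖ := by
        have := norm_le_pi_norm (fun j => ((q j : ℤ) : ℝ)) j
        rwa [Real.norm_eq_abs] at this
      rw [abs_mul, abs_of_pos (Real.exp_pos _)]
      calc Real.exp (-(t / n)) * |((q j : ℤ) : ℝ)|
          ≤ Real.exp (-(t / n)) * ‖fun j => ((q j : ℤ) : ℝ)‖ :=
            mul_le_mul_of_nonneg_left hle (Real.exp_pos _).le
      _ < ε' := key
    rcases hdisj with ⟨i, hi⟩ | ⟨j, hj⟩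
    · exact absurd hi (not_le.mpr (lt_of_lt_of_le (hAc i) hε'le))
    · exact absurd hj (not_le.mpr (lt_of_lt_of_le (hBc j) hε'le))
end
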